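/- (Partition-based pruning is optimality preserving) Let Π = ⟨P, A, I, G⟩ be a STRIPS planning problem with nonnegative action costs, and let A = A_1 ⊎ ... ⊎ A_n be an arbitrary partition of its actions into disjoint sets, with private and public propositions and actions defined with respect to this partition as in MA-STRIPS. Assume every proposition in G is public. If Π has an optimal solution of cost c, then Π has a solution of cost c that survives partition-based pruning, i.e., a solution in which every action that immediately follows a private action belonging to some A_i itself belongs to A_i. -/

import Mathlib

/-- A STRIPS action over a set of propositions `P`. -/
structure StripsAction (P : Type*) where
  pre : Set P
  add : Set P
  del : Set P

namespace StripsAction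

variable {P : Type*}

/-- The variable set of an action: all propositions it mentions. -/
def varset (a : StripsAction P) : Set P := a.pre ∪ a.add ∪ a.del

/-- An action is applicable in state `s` iff its preconditions hold in `s`. -/
def Applicable (a : StripsAction P) (s : Set P) : Prop := a.pre ⊆ s

/-- Applying an action to a state: `a(s) = (s \ del(a)) ∪ add(a)`. -/
def apply (a : StripsAction P) (s : Set P) : Set P := (s \ a.del) ∪ a.add

end StripsAction

/-- The state obtained by applying a sequence of actions in order. -/
def applySeq {P : Type*} : List (StripsAction P) → Set P → Set P
  | [], s => s
  | a :: rest, s => applySeq rest (a.apply s)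

/-- A sequence of actions is a legal plan from `s` iff each action is applicable in the
state obtained by applying the previous ones in order. -/
def LegalPlan {P : Type*} : List (StripsAction P) → Set P → Prop
  | [], _ => True
  | a :: rest, s => a.Applicable s ∧ LegalPlan rest (a.apply s)

/-- An MA-STRIPS problem: pairwise-disjoint finite action sets `A i` (one per agent),
an initial state and a goal. -/
structure MAProblem (P Ag : Type*) where
  A : Ag → Set (StripsAction P)
  disjoint : ∀ i j : Ag, i ≠ j → Disjoint (A i) (A j)
  finite : ∀ i : Ag, (A i).Finite
  I : Set P
  G : Set P

namespace MAProblem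

variable {P Ag : Type*}

/-- Proposition `p` is private to agent `i` iff every action mentioning `p` belongs to
`A i`. -/
def PrivateProp (pb : MAProblem P Ag) (p : P) (i : Ag) : Prop :=
  ∀ j : Ag, ∀ a ∈ pb.A j, p ∈ a.varset → j = i

/-- An action `a ∈ A i` is private iff every proposition it mentions is private to `i`. -/
def PrivateAction (pb : MAProblem P Ag) (a : StripsAction P) (i : Ag) : Prop :=
  a ∈ pb.A i ∧ ∀ p ∈ a.varset, pb.PrivateProp p i

/-- An action of the problem is public iff it is not private. -/
def PublicAction (pb : MAProblem P Ag) (a : StripsAction P) : Prop :=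
  (∃ i, a ∈ pb.A i) ∧ ∀ i : Ag, ¬ pb.PrivateAction a i

end MAProblem

/-- The cost of a plan is the sum of the costs of its actions. -/
def planCost {P : Type*} (cost : StripsAction P → ℝ) (L : List (StripsAction P)) : ℝ :=
  (L.map cost).sum

/-- A solution of an MA-STRIPS problem: a legal plan from `I`, built from the agents'
actions, whose final state contains the goal. -/
def Solution {P Ag : Type*} (pb : MAProblem P Ag) (L : List (StripsAction P)) : Prop :=
  (∀ x ∈ L, ∃ k, x ∈ pb.A k) ∧ LegalPlan L pb.I ∧ pb.G ⊆ applySeq L pb.I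

/-- A solution is optimal iff no solution has strictly smaller cost. -/
def OptimalSolution {P Ag : Type*} (pb : MAProblem P Ag) (cost : StripsAction P → ℝ)
    (L : List (StripsAction P)) : Prop :=
  Solution pb L ∧ ∀ L' : List (StripsAction P), Solution pb L' →
    planCost cost L ≤ planCost cost L'

/-- A plan survives partition-based pruning iff every action that immediately follows a
private action belonging to some `A i` itself belongs to `A i`. -/
def SurvivesPruning {P Ag : Type*} (pb : MAProblem P Ag) (L : List (StripsAction P)) : Prop :=
  ∀ (k : ℕ) (hk : k + 1 < L.length) (i : Ag),
    pb.PrivateAction (L.get ⟨k, Nat.lt_of_succ_lt hk⟩) i → L.get ⟨k + 1, hk⟩ ∈ pb.A i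

/-! ### Auxiliary development for the pruning theorem -/

section Aux

attribute [local instance] Classical.propDecidable

variable {P Ag : Type*}

lemma mem_apply_iff (a : StripsAction P) (s : Set P) (p : P) :
    p ∈ a.apply s ↔ (p ∈ s ∧ p ∉ a.del) ∨ p ∈ a.add := by
  simp [StripsAction.apply, Set.mem_diff]

lemma agree_apply {a : StripsAction P} {u v : Set P} {p : P} (h : p ∈ u ↔ p ∈ v) :
    p ∈ a.apply u ↔ p ∈ a.apply v := by
  simp [mem_apply_iff, h]

lemma agree_applySeq {p : P} : ∀ (L : List (StripsAction P)) {u v : Set P},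
    (p ∈ u ↔ p ∈ v) → (p ∈ applySeq L u ↔ p ∈ applySeq L v)
  | [], _, _, h => h
  | _ :: rest, _, _, h => agree_applySeq rest (agree_apply h)

lemma not_mem_varset_apply {a : StripsAction P} {u : Set P} {p : P} (h : p ∉ a.varset) :
    p ∈ a.apply u ↔ p ∈ u := by
  have h1 : p ∉ a.add := fun hp => h (Or.inl (Or.inr hp))
  have h2 : p ∉ a.del := fun hp => h (Or.inr hp)
  simp [mem_apply_iff, h1, h2]

lemma not_mem_varsets_applySeq {p : P} : ∀ (L : List (StripsAction P)) {u : Set P},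
    (∀ x ∈ L, p ∉ x.varset) → (p ∈ applySeq L u ↔ p ∈ u)
  | [], _, _ => Iff.rfl
  | a :: rest, u, h => by
    have : p ∈ applySeq rest (a.apply u) ↔ p ∈ a.apply u :=
      not_mem_varsets_applySeq rest (fun x hx => h x (List.mem_cons_of_mem _ hx))
    exact this.trans (not_mem_varset_apply (h a (List.mem_cons_self)))

lemma applySeq_append : ∀ (L M : List (StripsAction P)) (s : Set P),
    applySeq (L ++ M) s = applySeq M (applySeq L s)
  | [], _, _ => rfl
  | _ :: rest, M, s => applySeq_append rest M _

lemma legalPlan_append : ∀ (L M : List (StripsAction P)) (s : Set P),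
    LegalPlan (L ++ M) s ↔ LegalPlan L s ∧ LegalPlan M (applySeq L s)
  | [], M, s => by simp [LegalPlan, applySeq]
  | a :: rest, M, s => by
    show a.Applicable s ∧ LegalPlan (rest ++ M) (a.apply s) ↔ _
    rw [legalPlan_append rest M (a.apply s)]
    show _ ↔ (a.Applicable s ∧ LegalPlan rest (a.apply s)) ∧ LegalPlan M (applySeq rest (a.apply s))
    exact and_assoc.symm

lemma legal_of_agree : ∀ (L : List (StripsAction P)) {u v : Set P},
    (∀ x ∈ L, ∀ p ∈ x.varset, (p ∈ u ↔ p ∈ v)) → LegalPlan L u → LegalPlan L v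
  | [], _, _, _, _ => trivial
  | a :: rest, u, v, hag, hleg => by
    refine ⟨fun p hp => ?_, ?_⟩
    · exact (hag a (List.mem_cons_self) p (Or.inl (Or.inl hp))).mp (hleg.1 hp)
    · refine legal_of_agree rest (fun x hx p hp => ?_) hleg.2
      exact agree_apply (hag x (List.mem_cons_of_mem _ hx) p hp)

lemma planCost_nil (cost : StripsAction P → ℝ) : planCost cost [] = 0 := rfl

lemma planCost_cons (cost : StripsAction P → ℝ) (a : StripsAction P)
    (L : List (StripsAction P)) : planCost cost (a :: L) = cost a + planCost cost L := by
  simp [planCost]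

lemma planCost_append (cost : StripsAction P → ℝ) (L M : List (StripsAction P)) :
    planCost cost (L ++ M) = planCost cost L + planCost cost M := by
  simp [planCost]

lemma planCost_nonneg (cost : StripsAction P → ℝ) (h : ∀ a, 0 ≤ cost a)
    (L : List (StripsAction P)) : 0 ≤ planCost cost L :=
  List.sum_nonneg (by simpa using fun a _ => h a)

lemma mem_A_unique (pb : MAProblem P Ag) {x : StripsAction P} {i j : Ag}
    (hi : x ∈ pb.A i) (hj : x ∈ pb.A j) : i = j := by
  by_contra h
  exact Set.disjoint_left.mp (pb.disjoint i j h) hi hj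

/-- Inductive characterization of plans surviving partition-based pruning. -/
inductive Good (pb : MAProblem P Ag) : List (StripsAction P) → Prop
  | nil : Good pb []
  | single (a : StripsAction P) : Good pb [a]
  | cons (a b : StripsAction P) (l : List (StripsAction P))
      (h : ∀ i, pb.PrivateAction a i → b ∈ pb.A i) (hg : Good pb (b :: l)) :
      Good pb (a :: b :: l)

lemma good_survives {pb : MAProblem P Ag} {L : List (StripsAction P)}
    (hg : Good pb L) : SurvivesPruning pb L := by
  induction hg with
  | nil => intro k hk; simp at hk
  | single a => intro k hk; simp at hk
  | cons a b l hab hgood ih =>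
    intro k hk i hpriv
    cases k with
    | zero => exact hab i hpriv
    | succ k =>
      exact ih k (by simpa using hk) i hpriv

lemma good_cons_of_public {pb : MAProblem P Ag} {a : StripsAction P}
    {M : List (StripsAction P)} (hpub : ∀ i, ¬ pb.PrivateAction a i) (hM : Good pb M) :
    Good pb (a :: M) := by
  cases M with
  | nil => exact Good.single a
  | cons b l => exact Good.cons a b l (fun i h => absurd h (hpub i)) hM

lemma good_block {pb : MAProblem P Ag} {j : Ag} {a : StripsAction P}
    {M : List (StripsAction P)} :
    ∀ (B : List (StripsAction P)), (∀ x ∈ B, x ∈ pb.A j) → a ∈ pb.A j →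
    (∀ i, ¬ pb.PrivateAction a i) → Good pb M → Good pb (B ++ a :: M)
  | [], _, _, hpub, hM => good_cons_of_public hpub hM
  | x :: B, hB, ha, hpub, hM => by
    have hx : x ∈ pb.A j := hB x (List.mem_cons_self)
    have htail : Good pb (B ++ a :: M) :=
      good_block B (fun y hy => hB y (List.mem_cons_of_mem _ hy)) ha hpub hM
    have hheadA : ∀ y l, B ++ a :: M = y :: l → y ∈ pb.A j := by
      intro y l hy
      cases B with
      | nil =>
        simp only [List.nil_append, List.cons.injEq] at hy
        exact hy.1 ▸ ha
      | cons z B' =>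
        simp only [List.cons_append, List.cons.injEq] at hy
        exact hy.1 ▸ hB z (List.mem_cons_of_mem _ (List.mem_cons_self))
    cases hBM : (B ++ a :: M) with
    | nil => cases B <;> simp at hBM
    | cons y l =>
      rw [List.cons_append, hBM]
      refine Good.cons x y l ?_ (hBM ▸ htail)
      intro i hxi
      rw [mem_A_unique pb hxi.1 hx]
      exact hheadA y l hBM

/-- The buffering transformation: private actions are postponed (buffered per agent)
and flushed right before the owning agent's next public action; leftover buffered
actions are dropped at the end. -/
noncomputable def transform (pb : MAProblem P Ag) :
    List (StripsAction P) → (Ag → List (StripsAction P)) → List (StripsAction P)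
  | [], _ => []
  | a :: rest, buf =>
    if h : ∃ i, pb.PrivateAction a i then
      transform pb rest (Function.update buf h.choose (buf h.choose ++ [a]))
    else if h2 : ∃ j, a ∈ pb.A j then
      buf h2.choose ++ a :: transform pb rest (Function.update buf h2.choose [])
    else []

lemma transform_spec [Fintype Ag] (pb : MAProblem P Ag) (cost : StripsAction P → ℝ)
    (hcost : ∀ a, 0 ≤ cost a) :
    ∀ (L : List (StripsAction P)) (buf : Ag → List (StripsAction P)) (s t : Set P),
    (∀ x ∈ L, ∃ k, x ∈ pb.A k) →
    LegalPlan L s →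
    (∀ i, ∀ x ∈ buf i, pb.PrivateAction x i) →
    (∀ i, LegalPlan (buf i) t) →
    (∀ p i, pb.PrivateProp p i → (p ∈ s ↔ p ∈ applySeq (buf i) t)) →
    (∀ p, (∀ i, ¬ pb.PrivateProp p i) → (p ∈ s ↔ p ∈ t)) →
    (∀ x ∈ transform pb L buf, ∃ k, x ∈ pb.A k) ∧
    LegalPlan (transform pb L buf) t ∧
    (∀ p, (∀ i, ¬ pb.PrivateProp p i) → (p ∈ applySeq L s ↔ p ∈ applySeq (transform pb L buf) t)) ∧
    planCost cost (transform pb L buf) ≤ planCost cost L + ∑ i, planCost cost (buf i) ∧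
    Good pb (transform pb L buf)
  | [], buf, s, t, _, _, _, _, _, hpub => by
    refine ⟨by simp [transform], trivial, fun p hp => by simpa [transform, applySeq] using hpub p hp, ?_, by simp [transform]; exact Good.nil⟩
    simp only [transform, planCost_nil]
    have : (0:ℝ) ≤ ∑ i, planCost cost (buf i) :=
      Finset.sum_nonneg (fun i _ => planCost_nonneg cost hcost _)
    linarith
  | a :: rest, buf, s, t, hmem, hleg, hbufpriv, hbufleg, hinv3, hinv4 => by
    by_cases h : ∃ i, pb.PrivateAction a i
    · -- buffer the private action
      set i := h.choose with hi_def
      have hi : pb.PrivateAction a i := h.choose_spec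
      have haAi : a ∈ pb.A i := hi.1
      set buf' := Function.update buf i (buf i ++ [a]) with hbuf'
      have htr : transform pb (a :: rest) buf = transform pb rest buf' := by
        rw [transform, dif_pos h]
      have hnv : ∀ p i', pb.PrivateProp p i' → i' ≠ i → p ∉ a.varset := by
        intro p i' hp hne hpv
        exact hne (hp i a haAi hpv).symm
      have hIH := transform_spec (pb := pb) cost hcost rest buf' (a.apply s) t
        (fun x hx => hmem x (List.mem_cons_of_mem _ hx)) hleg.2
        (by
          intro i' x hx
          by_cases he : i' = i
          · rw [he, hbuf', Function.update_self] at hx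
            rcases List.mem_append.mp hx with hx | hx
            · rw [he]; exact hbufpriv i x hx
            · simp only [List.mem_singleton] at hx
              rw [he, hx]; exact hi
          · rw [hbuf', Function.update_of_ne he] at hx
            exact hbufpriv i' x hx)
        (by
          intro i'
          by_cases he : i' = i
          · rw [he, hbuf', Function.update_self, legalPlan_append]
            simp only [LegalPlan, and_true]
            exact ⟨hbufleg i,
              fun p hp => (hinv3 p i (hi.2 p (Or.inl (Or.inl hp)))).mp (hleg.1 hp)⟩
          · rw [hbuf', Function.update_of_ne he]
            exact hbufleg i')
        (by
          intro p i' hp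
          by_cases he : i' = i
          · rw [he, hbuf', Function.update_self, applySeq_append]
            simp only [applySeq]
            exact agree_apply (hinv3 p i (he ▸ hp))
          · have hnm : p ∉ a.varset := hnv p i' hp he
            rw [hbuf', Function.update_of_ne he]
            exact (not_mem_varset_apply hnm).trans (hinv3 p i' hp))
        (by
          intro p hp
          have hnm : p ∉ a.varset := fun hpv => hp i (hi.2 p hpv)
          exact (not_mem_varset_apply hnm).trans (hinv4 p hp))
      rw [htr]
      refine ⟨hIH.1, hIH.2.1, fun p hp => hIH.2.2.1 p hp, ?_, hIH.2.2.2.2⟩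
      have hsum : ∑ k, planCost cost (buf' k) = ∑ k, planCost cost (buf k) + cost a := by
        have hptw : ∀ k, planCost cost (buf' k)
            = Function.update (fun k => planCost cost (buf k)) i
              (planCost cost (buf i ++ [a])) k := by
          intro k
          rw [hbuf']
          exact Function.apply_update (fun _ x => planCost cost x) buf i _ k
        rw [Finset.sum_congr rfl (fun k _ => hptw k),
          Finset.sum_update_of_mem (Finset.mem_univ i),
          Finset.sum_eq_add_sum_sdiff_singleton_of_mem (Finset.mem_univ i)
            (fun k => planCost cost (buf k)),
          planCost_append, planCost_cons, planCost_nil]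
        ring
      have := hIH.2.2.2.1
      rw [planCost_cons]
      linarith
    · rcases hmem a (List.mem_cons_self) with ⟨k₀, hk₀⟩
      have h2 : ∃ j, a ∈ pb.A j := ⟨k₀, hk₀⟩
      set j := h2.choose with hj_def
      have hj : a ∈ pb.A j := h2.choose_spec
      set buf'' := Function.update buf j ([] : List (StripsAction P)) with hbuf''
      have htr : transform pb (a :: rest) buf = buf j ++ a :: transform pb rest buf'' := by
        rw [transform, dif_neg h, dif_pos h2]
      -- key states
      set t₁ := applySeq (buf j) t with ht₁
      set t' := a.apply t₁ with ht'
      -- buffered actions of other agents do not mention props private to i ≠ j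
      have hbufnot : ∀ (i : Ag) (p : P), pb.PrivateProp p i → i ≠ j →
          ∀ x ∈ buf j, p ∉ x.varset := by
        intro i p hp hne x hx hpv
        exact hne (hp j x ((hbufpriv j x hx).1) hpv).symm
      have hpubnot : ∀ p : P, (∀ i, ¬ pb.PrivateProp p i) → ∀ x ∈ buf j, p ∉ x.varset := by
        intro p hp x hx hpv
        exact hp j ((hbufpriv j x hx).2 p hpv)
      -- agreement between t and t' on props private to some i ≠ j
      have htt' : ∀ (i : Ag) (p : P), pb.PrivateProp p i → i ≠ j → (p ∈ t' ↔ p ∈ t) := by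
        intro i p hp hne
        have hna : p ∉ a.varset := fun hpv => hne (hp j a hj hpv).symm
        have h₁ : p ∈ t₁ ↔ p ∈ t :=
          not_mem_varsets_applySeq (buf j) (hbufnot i p hp hne)
        exact (not_mem_varset_apply hna).trans h₁
      -- agreement between t and t₁ on public props
      have htt₁pub : ∀ p : P, (∀ i, ¬ pb.PrivateProp p i) → (p ∈ t₁ ↔ p ∈ t) := by
        intro p hp
        exact not_mem_varsets_applySeq (buf j) (hpubnot p hp)
      -- a is applicable in t₁
      have happ : a.Applicable t₁ := by
        intro p hp
        have hps : p ∈ s := hleg.1 hp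
        by_cases hex : ∃ i, pb.PrivateProp p i
        · rcases hex with ⟨i, hi⟩
          have hij : j = i := hi j a hj (Or.inl (Or.inl hp))
          have := (hinv3 p i hi).mp hps
          rw [← hij] at this
          exact this
        · push_neg at hex
          exact (htt₁pub p hex).mpr ((hinv4 p hex).mp hps)
      have hIH := transform_spec (pb := pb) cost hcost rest buf'' (a.apply s) t'
        (fun x hx => hmem x (List.mem_cons_of_mem _ hx)) hleg.2
        (by
          intro i' x hx
          by_cases he : i' = j
          · rw [he, hbuf'', Function.update_self] at hx
            exact absurd hx (List.not_mem_nil)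
          · rw [hbuf'', Function.update_of_ne he] at hx
            exact hbufpriv i' x hx)
        (by
          intro i'
          by_cases he : i' = j
          · rw [he, hbuf'', Function.update_self]
            trivial
          · rw [hbuf'', Function.update_of_ne he]
            refine legal_of_agree (buf i') (fun x hx p hpv => ?_) (hbufleg i')
            have hpp : pb.PrivateProp p i' := (hbufpriv i' x hx).2 p hpv
            exact (htt' i' p hpp he).symm)
        (by
          intro p i' hp
          by_cases he : i' = j
          · rw [he, hbuf'', Function.update_self]
            simp only [applySeq]
            exact agree_apply (hinv3 p j (he ▸ hp))
          · rw [hbuf'', Function.update_of_ne he]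
            have hna : p ∉ a.varset := fun hpv => he (hp j a hj hpv).symm
            refine (not_mem_varset_apply hna).trans ?_
            refine (hinv3 p i' hp).trans ?_
            exact agree_applySeq (buf i') (htt' i' p hp he).symm)
        (by
          intro p hp
          exact agree_apply ((hinv4 p hp).trans (htt₁pub p hp).symm))
      rw [htr]
      obtain ⟨ihmem, ihleg, ihstate, ihcost, ihgood⟩ := hIH
      refine ⟨?_, ?_, ?_, ?_, ?_⟩
      · intro x hx
        rcases List.mem_append.mp hx with hx | hx
        · exact ⟨j, (hbufpriv j x hx).1⟩
        · rcases List.mem_cons.mp hx with hx | hx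
          · exact hx ▸ ⟨j, hj⟩
          · exact ihmem x hx
      · rw [legalPlan_append]
        exact ⟨hbufleg j, happ, ihleg⟩
      · intro p hp
        have : applySeq (buf j ++ a :: transform pb rest buf'') t
            = applySeq (transform pb rest buf'') t' := by
          rw [applySeq_append]; rfl
        rw [this]
        simpa [applySeq] using ihstate p hp
      · have hsum : ∑ k, planCost cost (buf'' k) + planCost cost (buf j)
            = ∑ k, planCost cost (buf k) := by
          have hptw : ∀ k, planCost cost (buf'' k)
              = Function.update (fun k => planCost cost (buf k)) j
                (planCost cost ([] : List (StripsAction P))) k := by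
            intro k
            rw [hbuf'']
            exact Function.apply_update (fun _ x => planCost cost x) buf j _ k
          rw [Finset.sum_congr rfl (fun k _ => hptw k),
            Finset.sum_update_of_mem (Finset.mem_univ j),
            Finset.sum_eq_add_sum_sdiff_singleton_of_mem (Finset.mem_univ j)
              (fun k => planCost cost (buf k)),
            planCost_nil]
          ring
        rw [planCost_append, planCost_cons, planCost_cons]
        linarith
      · refine good_block (buf j) (fun x hx => (hbufpriv j x hx).1) hj ?_ ihgood
        intro i hpi
        exact h ⟨i, hpi⟩


end Aux

/-- partition-based pruning is optimality preserving: for a STRIPS problem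
whose (finite) action set is partitioned into disjoint sets `A i` (modelled by
`MAProblem` with a finite index type), with nonnegative action costs and a goal made of
public propositions only: if there is an optimal solution of cost `c`, then there is a
solution of cost `c` that survives partition-based pruning. -/
theorem pb_pruning_optimality_preserving {P Ag : Type*} [Finite P] [Finite Ag]
    (pb : MAProblem P Ag) (cost : StripsAction P → ℝ)
    (hcost : ∀ a : StripsAction P, 0 ≤ cost a)
    (hG : ∀ p ∈ pb.G, ∀ i : Ag, ¬ pb.PrivateProp p i)
    (c : ℝ) (L : List (StripsAction P))
    (hopt : OptimalSolution pb cost L) (hc : planCost cost L = c) :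
    ∃ L' : List (StripsAction P), Solution pb L' ∧ planCost cost L' = c ∧
      SurvivesPruning pb L' := by
  cases nonempty_fintype Ag
  obtain ⟨⟨hmem, hleg, hgoal⟩, hoptmin⟩ := hopt
  obtain ⟨tmem, tleg, tstate, tcost, tgood⟩ :=
    transform_spec pb cost hcost L (fun _ => []) pb.I pb.I hmem hleg
      (fun i x hx => absurd hx (List.not_mem_nil))
      (fun _ => trivial)
      (fun p i _ => Iff.rfl)
      (fun p _ => Iff.rfl)
  set T := transform pb L (fun _ => ([] : List (StripsAction P))) with hT
  have hTsol : Solution pb T := by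
    refine ⟨tmem, tleg, fun g hg => ?_⟩
    exact (tstate g (hG g hg)).mp (hgoal hg)
  refine ⟨T, hTsol, ?_, good_survives tgood⟩
  have h1 : planCost cost T ≤ planCost cost L := by
    have : ∑ i : Ag, planCost cost ([] : List (StripsAction P)) = 0 := by
      simp [planCost]
    linarith [tcost, this ▸ tcost]
  have h2 : planCost cost L ≤ planCost cost T := hoptmin T hTsol
  linarith
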